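/- Let k > 0, c > 3k, and ξ₀ := √((c − 3k)/(2k)). Define N(c) := 2k(2c − 5k)(ξ₀√(1 + ξ₀²) + arcsinh ξ₀) − 4k²ξ₀(1 + ξ₀²)^{3/2}, M(c) := 4k(ξ₀√(1 + ξ₀²) + arcsinh ξ₀), M'(c) := 2√((c − k)/(c − 3k)), and E'(c) := 2√((c − 3k)(c − k)). Then N(c) · M'(c) − 2 M(c) · E'(c) < 0. -/

import Mathlib

/-- Negativity of the combination determining the sign of the second Puiseux
coefficient `λ₂`: with `ξ₀ = √((c-3k)/(2k))`,
`N(c) M'(c) - 2 M(c) E'(c) < 0`, where `N(c) = ‖ψ‖²_{L²}`, `M(c) = M_{1D}(ψ)`,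
`M'(c) = (d/dc)M_{1D}(ψ)` and `E'(c) = (d/dc)E_{1D}(ψ)` in closed form. -/
theorem puiseux_coefficient_neg (k c : ℝ) (hk : 0 < k) (hc : 3 * k < c) :
    (2 * k * (2 * c - 5 * k) *
          (Real.sqrt ((c - 3 * k) / (2 * k)) *
              Real.sqrt (1 + (Real.sqrt ((c - 3 * k) / (2 * k))) ^ 2) +
            Real.arsinh (Real.sqrt ((c - 3 * k) / (2 * k)))) -
        4 * k ^ 2 * Real.sqrt ((c - 3 * k) / (2 * k)) *
          (Real.sqrt (1 + (Real.sqrt ((c - 3 * k) / (2 * k))) ^ 2)) ^ 3) *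
        (2 * Real.sqrt ((c - k) / (c - 3 * k))) -
      2 * (4 * k * (Real.sqrt ((c - 3 * k) / (2 * k)) *
              Real.sqrt (1 + (Real.sqrt ((c - 3 * k) / (2 * k))) ^ 2) +
            Real.arsinh (Real.sqrt ((c - 3 * k) / (2 * k))))) *
        (2 * Real.sqrt ((c - 3 * k) * (c - k))) < 0 := by
  set x := Real.sqrt ((c - 3 * k) / (2 * k)) with hxdef
  have hck : 0 < c - 3 * k := by linarith
  have hx : 0 < x := Real.sqrt_pos.mpr (by positivity)
  have hx2 : x ^ 2 = (c - 3 * k) / (2 * k) := Real.sq_sqrt (by positivity)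
  have hc3 : c - 3 * k = 2 * k * x ^ 2 := by
    field_simp at hx2; linarith [hx2]
  set s := Real.sqrt (1 + x ^ 2) with hsdef
  have hs2 : s ^ 2 = 1 + x ^ 2 := Real.sq_sqrt (by positivity)
  have hs1 : 1 ≤ s := by
    rw [hsdef]
    nlinarith [Real.sq_sqrt (show (0:ℝ) ≤ 1 + x ^ 2 by positivity),
      Real.sqrt_nonneg (1 + x ^ 2)]
  have hs : 0 < s := lt_of_lt_of_le one_pos hs1
  set a := Real.arsinh x with hadef
  have ha0 : 0 < a := Real.arsinh_pos_iff.mpr hx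
  have hax : a < x := by
    have h1 : Real.sinh a < Real.sinh x := by
      rw [hadef, Real.sinh_arsinh]
      exact Real.self_lt_sinh_iff.mpr hx
    exact Real.sinh_lt_sinh.mp h1
  have h1 : Real.sqrt ((c - k) / (c - 3 * k)) = s / x := by
    rw [show (c - k) / (c - 3 * k) = (s / x) ^ 2 by
      rw [div_pow, hs2, hx2, hc3]
      field_simp
      linear_combination hc3]
    exact Real.sqrt_sq (by positivity)
  have h2 : Real.sqrt ((c - 3 * k) * (c - k)) = 2 * k * x * s := by
    rw [show (c - 3 * k) * (c - k) = (2 * k * x * s) ^ 2 by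
      linear_combination (c - k + 2 * k * x ^ 2) * hc3 - 4 * k ^ 2 * x ^ 2 * hs2]
    exact Real.sqrt_sq (by positivity)
  rw [h1, h2]
  -- reduce to the key inequality g < 0 with g = (1-4x²)(xs+a) - 2xs³
  have hg : (1 - 4 * x ^ 2) * (x * s + a) - 2 * x * s ^ 3 < 0 := by
    have hxs : s ^ 3 = s * (1 + x ^ 2) := by nlinarith [hs2]
    nlinarith [mul_pos hx hs, mul_pos (mul_pos hx hs) (mul_pos hx hx),
      mul_le_mul_of_nonneg_left hs1 hx.le, sq_nonneg x, sq_nonneg (x*s)]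
  have hcval : c = 2 * k * x ^ 2 + 3 * k := by linarith [hc3]
  have key : x * ((2 * k * (2 * c - 5 * k) * (x * s + a) -
        4 * k ^ 2 * x * s ^ 3) * (2 * (s / x)) -
      2 * (4 * k * (x * s + a)) * (2 * (2 * k * x * s)))
      = 4 * k ^ 2 * s * ((1 - 4 * x ^ 2) * (x * s + a) - 2 * x * s ^ 3) := by
    rw [hcval]
    field_simp
    ring
  have hE : x * ((2 * k * (2 * c - 5 * k) * (x * s + a) -
        4 * k ^ 2 * x * s ^ 3) * (2 * (s / x)) -
      2 * (4 * k * (x * s + a)) * (2 * (2 * k * x * s))) < 0 := by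
    rw [key]
    exact mul_neg_of_pos_of_neg (by positivity) hg
  by_contra h
  push_neg at h
  nlinarith [mul_nonneg hx.le h]
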